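/- Let (Ω, 𝔉, P) be a probability space, α ∈ (0,1), and let X, Y be integrable real-valued random variables. Then the conditional value-at-risk is subadditive: CVaR_α(X + Y) ≤ CVaR_α(X) + CVaR_α(Y). -/

import Mathlib

open MeasureTheory

/-- Value-at-risk at level `α` of the loss `X`: the `α`-quantile
`VaR_α(X) = inf {x : P(X ≤ x) ≥ α}`. -/
noncomputable def VaR {Ω : Type*} [MeasurableSpace Ω] (P : Measure Ω) (X : Ω → ℝ) (α : ℝ) : ℝ :=
  sInf {x : ℝ | α ≤ (P {ω | X ω ≤ x}).toReal}

/-- Conditional value-at-risk: `CVaR_α(X) = (1-α)⁻¹ ∫_α^1 VaR_u(X) du`. -/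
noncomputable def CVaR {Ω : Type*} [MeasurableSpace Ω] (P : Measure Ω) (X : Ω → ℝ) (α : ℝ) : ℝ :=
  (1 - α)⁻¹ * ∫ u in α..1, VaR P X u

section Aux

open Set Filter

variable {Ω : Type*} [MeasurableSpace Ω] (P : Measure Ω) [IsProbabilityMeasure P] (X : Ω → ℝ)

private lemma cdf_mono : Monotone (fun z : ℝ => (P {ω | X ω ≤ z}).toReal) := fun a b hab =>
  ENNReal.toReal_mono (measure_ne_top _ _) (measure_mono fun ω h => le_trans h hab)

private lemma cdf_nonneg (z : ℝ) : 0 ≤ (P {ω | X ω ≤ z}).toReal := ENNReal.toReal_nonneg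

private lemma cdf_set_nonempty {u : ℝ} (hu : u < 1) :
    {x : ℝ | u ≤ (P {ω | X ω ≤ x}).toReal}.Nonempty := by
  have hU : ⋃ n : ℕ, {ω | X ω ≤ (n : ℝ)} = univ := by
    ext ω
    simp only [mem_iUnion, mem_univ, iff_true, mem_setOf_eq]
    exact exists_nat_ge (X ω)
  have h1 : Tendsto (fun n : ℕ => P {ω | X ω ≤ (n : ℝ)}) atTop (nhds 1) := by
    have := tendsto_measure_iUnion_atTop (μ := P) (s := fun n : ℕ => {ω | X ω ≤ (n : ℝ)})
      (fun a b hab ω h => by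
        simp only [Set.mem_setOf_eq] at h ⊢
        exact le_trans h (Nat.cast_le.mpr hab))
    rw [hU, measure_univ] at this
    exact this
  have h2 : Tendsto (fun n : ℕ => (P {ω | X ω ≤ (n : ℝ)}).toReal) atTop (nhds 1) := by
    simpa [Function.comp_def] using (ENNReal.tendsto_toReal ENNReal.one_ne_top).comp h1
  obtain ⟨n, hn⟩ := (h2.eventually (eventually_ge_nhds hu)).exists
  exact ⟨(n : ℝ), hn⟩

private lemma cdf_bddBelow (hXm : Measurable X) {u : ℝ} (hu : 0 < u) :
    BddBelow {x : ℝ | u ≤ (P {ω | X ω ≤ x}).toReal} := by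
  have hI : ⋂ n : ℕ, {ω | X ω ≤ -(n : ℝ)} = ∅ := by
    ext ω
    simp only [mem_iInter, mem_empty_iff_false, iff_false, mem_setOf_eq, not_forall]
    obtain ⟨n, hn⟩ := exists_nat_gt (-X ω)
    exact ⟨n, by push_neg; linarith⟩
  have h1 : Tendsto (fun n : ℕ => P {ω | X ω ≤ -(n : ℝ)}) atTop (nhds 0) := by
    have := tendsto_measure_iInter_atTop (μ := P) (s := fun n : ℕ => {ω | X ω ≤ -(n : ℝ)})
      (fun n => (hXm measurableSet_Iic).nullMeasurableSet)
      (fun a b hab ω h => by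
        simp only [Set.mem_setOf_eq] at h ⊢
        exact le_trans h (neg_le_neg (Nat.cast_le.mpr hab)))
      ⟨0, measure_ne_top P _⟩
    rw [hI, measure_empty] at this
    exact this
  have h2 : Tendsto (fun n : ℕ => (P {ω | X ω ≤ -(n : ℝ)}).toReal) atTop (nhds 0) := by
    simpa [Function.comp_def] using (ENNReal.tendsto_toReal ENNReal.zero_ne_top).comp h1
  obtain ⟨n, hn⟩ := (h2.eventually (eventually_lt_nhds hu)).exists
  refine ⟨-(n : ℝ), fun x hx => ?_⟩
  by_contra hc
  push_neg at hc
  exact absurd (le_trans hx (cdf_mono P X hc.le)) (not_le.mpr hn)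

private lemma cdf_tendsto_right (hXm : Measurable X) (z : ℝ) :
    Tendsto (fun n : ℕ => (P {ω | X ω ≤ z + 1 / ((n : ℝ) + 1)}).toReal) atTop
      (nhds ((P {ω | X ω ≤ z}).toReal)) := by
  have hI : ⋂ n : ℕ, {ω | X ω ≤ z + 1 / ((n : ℝ) + 1)} = {ω | X ω ≤ z} := by
    ext ω
    simp only [mem_iInter, mem_setOf_eq]
    constructor
    · intro h
      by_contra hc
      push_neg at hc
      obtain ⟨n, hn⟩ := exists_nat_one_div_lt (sub_pos.mpr hc)
      exact absurd (h n) (by push_neg; linarith)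
    · intro h n
      have h0 : (0 : ℝ) < 1 / ((n : ℝ) + 1) := by positivity
      linarith
  have h1 := tendsto_measure_iInter_atTop (μ := P)
    (s := fun n : ℕ => {ω | X ω ≤ z + 1 / ((n : ℝ) + 1)})
    (fun n => (hXm measurableSet_Iic).nullMeasurableSet)
    (fun a b hab ω h => by
      simp only [Set.mem_setOf_eq] at h ⊢
      have h1 : (a : ℝ) + 1 ≤ (b : ℝ) + 1 := by exact_mod_cast Nat.succ_le_succ hab
      have h2 : (0 : ℝ) < (a : ℝ) + 1 := by positivity
      refine le_trans h ?_
      gcongr)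
    ⟨0, measure_ne_top P _⟩
  rw [hI] at h1
  exact (ENNReal.tendsto_toReal (measure_ne_top P _)).comp h1

private lemma VaR_le_iff (hXm : Measurable X) {u : ℝ} (hu : u ∈ Set.Ioo (0:ℝ) 1) (z : ℝ) :
    VaR P X u ≤ z ↔ u ≤ (P {ω | X ω ≤ z}).toReal := by
  constructor
  · intro h
    refine ge_of_tendsto' (cdf_tendsto_right P X hXm z) fun n => ?_
    have hlt : VaR P X u < z + 1 / ((n : ℝ) + 1) :=
      lt_of_le_of_lt h (lt_add_of_pos_right z (by positivity))
    obtain ⟨x, hxS, hx⟩ := (csInf_lt_iff (cdf_bddBelow P X hXm hu.1)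
      (cdf_set_nonempty P X hu.2)).mp hlt
    exact le_trans hxS (cdf_mono P X hx.le)
  · intro h
    exact csInf_le (cdf_bddBelow P X hXm hu.1) h

private lemma VaR_mono (hXm : Measurable X) : MonotoneOn (VaR P X) (Set.Ioo (0:ℝ) 1) := by
  intro u hu v hv huv
  have h1 : VaR P X v ≤ VaR P X v := le_refl _
  rw [VaR_le_iff P X hXm hv] at h1
  exact (VaR_le_iff P X hXm hu _).mpr (le_trans huv h1)

private lemma tail_eq (hXm : Measurable X) (s : ℝ) :
    P {ω | s < X ω} = ENNReal.ofReal (1 - (P {ω | X ω ≤ s}).toReal) := by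
  have hc : {ω | s < X ω} = {ω | X ω ≤ s}ᶜ := by
    ext ω; simp [not_le]
  have hms : MeasurableSet {ω | X ω ≤ s} := hXm measurableSet_Iic
  have h2 : (1 : ℝ) - (P {ω | X ω ≤ s}).toReal = ((1 : ENNReal) - P {ω | X ω ≤ s}).toReal := by
    rw [ENNReal.toReal_sub_of_le prob_le_one ENNReal.one_ne_top, ENNReal.toReal_one]
  rw [hc, measure_compl hms (measure_ne_top _ _), measure_univ, h2,
    ENNReal.ofReal_toReal (ENNReal.sub_ne_top ENNReal.one_ne_top)]

private lemma layer_eq (hXm : Measurable X) (z : ℝ) {t : ℝ} (ht : 0 < t) :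
    volume ({u : ℝ | t < max (VaR P X u - z) 0} ∩ Set.Ioo 0 1)
      = P {ω | t < max (X ω - z) 0} := by
  have hmax : ∀ v : ℝ, (t < max (v - z) 0 ↔ z + t < v) := by
    intro v
    rw [lt_max_iff]
    constructor
    · rintro (h | h)
      · linarith
      · linarith
    · intro h; left; linarith
  have hset : {u : ℝ | t < max (VaR P X u - z) 0} ∩ Set.Ioo 0 1
      = Set.Ioo ((P {ω | X ω ≤ z + t}).toReal) 1 := by
    ext u
    simp only [mem_inter_iff, mem_setOf_eq, mem_Ioo, hmax]
    constructor
    · rintro ⟨h1, h2, h3⟩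
      refine ⟨?_, h3⟩
      by_contra hc
      push_neg at hc
      exact absurd ((VaR_le_iff P X hXm ⟨h2, h3⟩ (z + t)).mpr hc) (not_le.mpr h1)
    · rintro ⟨h1, h2⟩
      have hu0 : 0 < u := lt_of_le_of_lt (cdf_nonneg P X _) h1
      refine ⟨?_, hu0, h2⟩
      by_contra hc
      push_neg at hc
      exact absurd ((VaR_le_iff P X hXm ⟨hu0, h2⟩ (z + t)).mp hc) (not_le.mpr h1)
  have hsetP : {ω | t < max (X ω - z) 0} = {ω | z + t < X ω} := by
    ext ω; simp [hmax]
  rw [hset, hsetP, Real.volume_Ioo, tail_eq P X hXm (z + t)]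

private lemma quantile_aemeasurable (hXm : Measurable X) (z : ℝ) :
    AEMeasurable (fun u => max (VaR P X u - z) 0) (volume.restrict (Set.Ioo (0:ℝ) 1)) := by
  have h1 : AEMeasurable (VaR P X) (volume.restrict (Set.Ioo (0:ℝ) 1)) :=
    aemeasurable_restrict_of_monotoneOn measurableSet_Ioo (VaR_mono P X hXm)
  exact (h1.sub aemeasurable_const).max aemeasurable_const

private lemma quantile_lintegral (hXm : Measurable X) (z : ℝ) :
    ∫⁻ u in Set.Ioo (0:ℝ) 1, ENNReal.ofReal (max (VaR P X u - z) 0)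
      = ∫⁻ ω, ENNReal.ofReal (max (X ω - z) 0) ∂P := by
  rw [lintegral_eq_lintegral_meas_lt (f := fun u => max (VaR P X u - z) 0) _
      (ae_of_all _ fun u => le_max_right _ _) (quantile_aemeasurable P X hXm z),
    lintegral_eq_lintegral_meas_lt (f := fun ω => max (X ω - z) 0) P
      (ae_of_all _ fun ω => le_max_right _ _)
      ((hXm.sub measurable_const).max measurable_const).aemeasurable]
  refine setLIntegral_congr_fun_ae measurableSet_Ioi (ae_of_all _ fun t ht => ?_)
  rw [Measure.restrict_apply' measurableSet_Ioo, layer_eq P X hXm z ht]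

private lemma quantile_pospart_integrable (hXm : Measurable X) (hX : Integrable X P) (z : ℝ) :
    IntegrableOn (fun u => max (VaR P X u - z) 0) (Set.Ioo (0:ℝ) 1) := by
  refine ⟨(quantile_aemeasurable P X hXm z).aestronglyMeasurable, ?_⟩
  rw [hasFiniteIntegral_iff_ofReal (f := fun u => max (VaR P X u - z) 0)
      (ae_of_all _ fun u => le_max_right _ _),
    quantile_lintegral P X hXm z,
    ← hasFiniteIntegral_iff_ofReal (f := fun ω => max (X ω - z) 0)
      (ae_of_all _ fun ω => le_max_right _ _)]
  exact ((hX.sub (integrable_const z)).pos_part).hasFiniteIntegral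

private lemma quantile_integral_eq (hXm : Measurable X) (hX : Integrable X P) (z : ℝ) :
    ∫ u in Set.Ioo (0:ℝ) 1, max (VaR P X u - z) 0 = ∫ ω, max (X ω - z) 0 ∂P := by
  rw [integral_eq_lintegral_of_nonneg_ae (f := fun u => max (VaR P X u - z) 0)
      (ae_of_all _ fun u => le_max_right _ _)
      (quantile_aemeasurable P X hXm z).aestronglyMeasurable,
    integral_eq_lintegral_of_nonneg_ae (f := fun ω => max (X ω - z) 0)
      (ae_of_all _ fun ω => le_max_right _ _)
      ((hXm.sub measurable_const).max measurable_const).aestronglyMeasurable,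
    quantile_lintegral P X hXm z]

private lemma VaR_integrableOn (hXm : Measurable X) (hX : Integrable X P)
    {α : ℝ} (hα : α ∈ Set.Ioo (0 : ℝ) 1) :
    IntegrableOn (VaR P X) (Set.Ioo α 1) := by
  set a := VaR P X α with ha
  have hsub : Set.Ioo α 1 ⊆ Set.Ioo (0:ℝ) 1 := Set.Ioo_subset_Ioo hα.1.le le_rfl
  have hint : IntegrableOn (fun u => |a| + max (VaR P X u - a) 0) (Set.Ioo α 1) := by
    refine (integrableOn_const measure_Ioo_lt_top.ne).add ?_
    exact (quantile_pospart_integrable P X hXm hX a).mono_set hsub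
  refine Integrable.mono' hint ?_ (ae_restrict_of_forall_mem measurableSet_Ioo fun u hu => ?_)
  · exact (aemeasurable_restrict_of_monotoneOn measurableSet_Ioo
      ((VaR_mono P X hXm).mono hsub)).aestronglyMeasurable
  · have haq : a ≤ VaR P X u := VaR_mono P X hXm hα (hsub hu) hu.1.le
    calc ‖VaR P X u‖ = |a + (VaR P X u - a)| := by rw [Real.norm_eq_abs]; ring_nf
      _ ≤ |a| + |VaR P X u - a| := abs_add_le _ _
      _ ≤ |a| + max (VaR P X u - a) 0 := by
          rw [abs_of_nonneg (sub_nonneg.mpr haq)]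
          exact add_le_add_right (le_max_left _ _) _

private lemma pospart_split (hXm : Measurable X) (hX : Integrable X P)
    {α : ℝ} (hα : α ∈ Set.Ioo (0 : ℝ) 1) :
    ∫ u in Set.Ioo α 1, max (VaR P X u - VaR P X α) 0
      = ∫ ω, max (X ω - VaR P X α) 0 ∂P := by
  set a := VaR P X α with ha
  have h01 : Set.Ioc (0:ℝ) α ∪ Set.Ioo α 1 = Set.Ioo (0:ℝ) 1 :=
    Set.Ioc_union_Ioo_eq_Ioo hα.1.le hα.2
  have hdisj : Disjoint (Set.Ioc (0:ℝ) α) (Set.Ioo α 1) :=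
    Set.disjoint_left.mpr fun u h1 h2 => absurd h1.2 (not_le.mpr h2.1)
  have hzero : ∫ u in Set.Ioc (0:ℝ) α, max (VaR P X u - a) 0 = 0 := by
    rw [setIntegral_congr_fun measurableSet_Ioc (g := fun _ => (0:ℝ))
      (fun u hu => max_eq_right (sub_nonpos.mpr
        (VaR_mono P X hXm ⟨hu.1, lt_of_le_of_lt hu.2 hα.2⟩ hα hu.2)))]
    simp
  have hunion := setIntegral_union hdisj measurableSet_Ioo
    (((quantile_pospart_integrable P X hXm hX a)).mono_set
      (h01 ▸ Set.subset_union_left))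
    (((quantile_pospart_integrable P X hXm hX a)).mono_set
      (h01 ▸ Set.subset_union_right))
    (f := fun u => max (VaR P X u - a) 0) (μ := volume)
  rw [h01] at hunion
  rw [← quantile_integral_eq P X hXm hX a, hunion, hzero, zero_add]

private lemma VaR_integral_eq (hXm : Measurable X) (hX : Integrable X P)
    {α : ℝ} (hα : α ∈ Set.Ioo (0 : ℝ) 1) :
    ∫ u in Set.Ioo α 1, VaR P X u
      = (1 - α) * VaR P X α + ∫ ω, max (X ω - VaR P X α) 0 ∂P := by
  set a := VaR P X α with ha
  have hsub : Set.Ioo α 1 ⊆ Set.Ioo (0:ℝ) 1 := Set.Ioo_subset_Ioo hα.1.le le_rfl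
  have h1 : ∫ u in Set.Ioo α 1, VaR P X u
      = ∫ u in Set.Ioo α 1, (a + max (VaR P X u - a) 0) := by
    refine setIntegral_congr_fun measurableSet_Ioo fun u hu => ?_
    have haq : a ≤ VaR P X u := VaR_mono P X hXm hα (hsub hu) hu.1.le
    rw [max_eq_left (sub_nonneg.mpr haq)]
    ring
  rw [h1, integral_add (integrableOn_const (C := a) measure_Ioo_lt_top.ne)
    ((quantile_pospart_integrable P X hXm hX a).mono_set hsub),
    setIntegral_const, pospart_split P X hXm hX hα, measureReal_def, Real.volume_Ioo,
    ENNReal.toReal_ofReal (by linarith [hα.2]), smul_eq_mul]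

private lemma VaR_integral_le (hXm : Measurable X) (hX : Integrable X P)
    {α : ℝ} (hα : α ∈ Set.Ioo (0 : ℝ) 1) (z : ℝ) :
    ∫ u in Set.Ioo α 1, VaR P X u ≤ (1 - α) * z + ∫ ω, max (X ω - z) 0 ∂P := by
  have hsub : Set.Ioo α 1 ⊆ Set.Ioo (0:ℝ) 1 := Set.Ioo_subset_Ioo hα.1.le le_rfl
  have h1 : ∫ u in Set.Ioo α 1, VaR P X u
      ≤ ∫ u in Set.Ioo α 1, (z + max (VaR P X u - z) 0) := by
    refine setIntegral_mono_on (VaR_integrableOn P X hXm hX hα)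
      ((integrableOn_const measure_Ioo_lt_top.ne).add
        ((quantile_pospart_integrable P X hXm hX z).mono_set hsub))
      measurableSet_Ioo fun u hu => ?_
    have := le_max_left (VaR P X u - z) 0
    linarith
  have h2 : ∫ u in Set.Ioo α 1, max (VaR P X u - z) 0
      ≤ ∫ u in Set.Ioo (0:ℝ) 1, max (VaR P X u - z) 0 :=
    setIntegral_mono_set (quantile_pospart_integrable P X hXm hX z)
      (ae_of_all _ fun u => le_max_right _ _) (HasSubset.Subset.eventuallyLE hsub)
  have h3 : ∫ u in Set.Ioo α 1, (z + max (VaR P X u - z) 0)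
      = (1 - α) * z + ∫ u in Set.Ioo α 1, max (VaR P X u - z) 0 := by
    rw [integral_add (integrableOn_const (C := z) measure_Ioo_lt_top.ne)
      ((quantile_pospart_integrable P X hXm hX z).mono_set hsub),
      setIntegral_const, measureReal_def, Real.volume_Ioo,
      ENNReal.toReal_ofReal (by linarith [hα.2]), smul_eq_mul]
  rw [quantile_integral_eq P X hXm hX z] at h2
  linarith

end Aux

/-- Subadditivity of the conditional value-at-risk. -/
theorem CVaR_subadditive {Ω : Type*} [MeasurableSpace Ω] (P : Measure Ω)
    [IsProbabilityMeasure P] (α : ℝ) (hα : α ∈ Set.Ioo (0:ℝ) 1)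
    (X Y : Ω → ℝ) (hXm : Measurable X) (hYm : Measurable Y)
    (hX : Integrable X P) (hY : Integrable Y P) :
    CVaR P (fun ω => X ω + Y ω) α ≤ CVaR P X α + CVaR P Y α := by
  set a := VaR P X α with ha
  set b := VaR P Y α with hb
  set Z := fun ω => X ω + Y ω with hZdef
  have hZm : Measurable Z := hXm.add hYm
  have hZ : Integrable Z P := hX.add hY
  have hXa : Integrable (fun ω => max (X ω - a) 0) P := (hX.sub (integrable_const a)).pos_part
  have hYb : Integrable (fun ω => max (Y ω - b) 0) P := (hY.sub (integrable_const b)).pos_part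
  have hZab : Integrable (fun ω => max (Z ω - (a + b)) 0) P :=
    (hZ.sub (integrable_const (a + b))).pos_part
  have h4 : ∫ ω, max (Z ω - (a + b)) 0 ∂P
      ≤ ∫ ω, (max (X ω - a) 0 + max (Y ω - b) 0) ∂P := by
    refine integral_mono hZab (hXa.add hYb) fun ω => ?_
    refine max_le ?_ (add_nonneg (le_max_right _ _) (le_max_right _ _))
    have h5 := le_max_left (X ω - a) 0
    have h6 := le_max_left (Y ω - b) 0
    simp only [hZdef]
    linarith
  rw [integral_add hXa hYb] at h4
  have h1 := VaR_integral_le P Z hZm hZ hα (a + b)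
  have h2 := VaR_integral_eq P X hXm hX hα
  have h3 := VaR_integral_eq P Y hYm hY hα
  have key : ∫ u in Set.Ioo α 1, VaR P Z u
      ≤ (∫ u in Set.Ioo α 1, VaR P X u) + ∫ u in Set.Ioo α 1, VaR P Y u := by
    rw [h2, h3, ← ha, ← hb]
    linarith
  have hinv : (0 : ℝ) ≤ (1 - α)⁻¹ := inv_nonneg.mpr (by linarith [hα.2])
  unfold CVaR
  rw [intervalIntegral.integral_of_le hα.2.le, intervalIntegral.integral_of_le hα.2.le,
    intervalIntegral.integral_of_le hα.2.le, integral_Ioc_eq_integral_Ioo,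
    integral_Ioc_eq_integral_Ioo, integral_Ioc_eq_integral_Ioo, ← mul_add]
  exact mul_le_mul_of_nonneg_left key hinv
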